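/- (Conditional extension of the subadditivity inequality, used in the proof of Theorem A.1(d)) Let A and B be random variables taking finitely many real values and let C and D be finite-valued random variables. If A ⊥ B | D and A ⊥ B | (D, C), then I(A + B; C | D) ≤ I(A; C | D) + I(B; C | D). -/

import Mathlib

open MeasureTheory

namespace MarginalTransfer

variable {Ω : Type*} [MeasurableSpace Ω]

/-- `P(A) := μ(A)`, as a real number. -/
noncomputable def pr (μ : Measure Ω) (A : Set Ω) : ℝ := (μ A).toReal

/-- Conditional mutual information
`I(U;V|W) := Σ_{u,v,w} P(U=u, V=v, W=w) ·
  log( (P(U=u, V=v, W=w) · P(W=w)) / (P(U=u, W=w) · P(V=v, W=w)) )`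
for finitely-valued random variables; any summand whose leading factor
`P(U=u, V=v, W=w)` is zero vanishes. -/
noncomputable def condMI {α β γ : Type*} (μ : Measure Ω)
    (U : Ω → α) (V : Ω → β) (W : Ω → γ) : ℝ :=
  ∑' u : α, ∑' v : β, ∑' w : γ,
    pr μ {ω | U ω = u ∧ V ω = v ∧ W ω = w} *
      Real.log (pr μ {ω | U ω = u ∧ V ω = v ∧ W ω = w} * pr μ {ω | W ω = w} /
        (pr μ {ω | U ω = u ∧ W ω = w} * pr μ {ω | V ω = v ∧ W ω = w}))

/-- Unconditional mutual information `I(U;V)`: the same formula with `W` a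
constant random variable. -/
noncomputable def mutualInfo {α β : Type*} (μ : Measure Ω)
    (U : Ω → α) (V : Ω → β) : ℝ :=
  condMI μ U V (fun _ => (() : Unit))

/-- Conditional independence `U ⟂ V ∣ W`:
`P(U=u, V=v, W=w) · P(W=w) = P(U=u, W=w) · P(V=v, W=w)` for all `u, v, w`. -/
def CondIndep {α β γ : Type*} (μ : Measure Ω)
    (U : Ω → α) (V : Ω → β) (W : Ω → γ) : Prop :=
  ∀ u v w,
    pr μ {ω | U ω = u ∧ V ω = v ∧ W ω = w} * pr μ {ω | W ω = w} =
      pr μ {ω | U ω = u ∧ W ω = w} * pr μ {ω | V ω = v ∧ W ω = w}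

/-- Unconditional independence `U ⟂ V`: conditional independence given a
constant random variable. -/
def Indep {α β : Type*} (μ : Measure Ω) (U : Ω → α) (V : Ω → β) : Prop :=
  CondIndep μ U V (fun _ => (() : Unit))

/-- Shannon entropy `H(U) := −Σ_u P(U=u) · log P(U=u)`. -/
noncomputable def entropy {α : Type*} (μ : Measure Ω) (U : Ω → α) : ℝ :=
  -∑' u : α, pr μ {ω | U ω = u} * Real.log (pr μ {ω | U ω = u})

/-- Conditional Shannon entropy
`H(U|V) := −Σ_{u,v} P(U=u, V=v) · log( P(U=u, V=v) / P(V=v) )`. -/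
noncomputable def condEntropy {α β : Type*} (μ : Measure Ω)
    (U : Ω → α) (V : Ω → β) : ℝ :=
  -∑' u : α, ∑' v : β,
    pr μ {ω | U ω = u ∧ V ω = v} *
      Real.log (pr μ {ω | U ω = u ∧ V ω = v} / pr μ {ω | V ω = v})

end MarginalTransfer

open MarginalTransfer

namespace MarginalTransferAux
open MarginalTransfer MeasureTheory

variable {Ω : Type*} [MeasurableSpace Ω] (μ : Measure Ω)

lemma pr_nonneg (E : Set Ω) : 0 ≤ pr μ E := ENNReal.toReal_nonneg

lemma pr_mono [IsProbabilityMeasure μ] {E F : Set Ω} (h : E ⊆ F) : pr μ E ≤ pr μ F :=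
  ENNReal.toReal_mono (measure_ne_top _ _) (measure_mono h)

lemma pr_congr {P Q : Ω → Prop} (h : ∀ ω, P ω ↔ Q ω) :
    pr μ {ω | P ω} = pr μ {ω | Q ω} := by
  have hPQ : {ω | P ω} = ({ω | Q ω} : Set Ω) := Set.ext h
  rw [pr, pr, hPQ]

lemma pr_empty_of (P : Ω → Prop) (h : ∀ ω, ¬ P ω) : pr μ {ω | P ω} = 0 := by
  have he : {ω | P ω} = (∅ : Set Ω) := Set.eq_empty_iff_forall_notMem.2 h
  unfold pr; rw [he]; simp

/-- Decomposition of a probability over the fibers of a finitely-valued map. -/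
lemma pr_decompose [IsProbabilityMeasure μ] {ι : Type*} (f : Ω → ι) (S : Finset ι)
    (hS : ∀ ω, f ω ∈ S) (P : Ω → Prop)
    (hm : ∀ i, MeasurableSet {ω | f ω = i ∧ P ω}) :
    pr μ {ω | P ω} = ∑ i ∈ S, pr μ {ω | f ω = i ∧ P ω} := by
  classical
  have hset : {ω | P ω} = ⋃ i ∈ S, {ω | f ω = i ∧ P ω} := by
    ext ω
    simp only [Set.mem_setOf_eq, Set.mem_iUnion]
    constructor
    · intro h; exact ⟨f ω, hS ω, rfl, h⟩
    · rintro ⟨i, _, _, h⟩; exact h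
  have hdisj : (S : Set ι).PairwiseDisjoint (fun i => {ω | f ω = i ∧ P ω}) := by
    intro i _ j _ hij
    refine Set.disjoint_left.2 ?_
    rintro ω ⟨hi, -⟩ ⟨hj, -⟩
    exact hij (hi ▸ hj ▸ rfl)
  unfold pr
  rw [hset, measure_biUnion_finset hdisj (fun i _ => hm i), ENNReal.toReal_sum]
  intro i _; exact measure_ne_top _ _

/-- The log-sum inequality in the form we need. -/
lemma sum_mul_log_div_nonneg {ι : Type*} (T : Finset ι) (x y : ι → ℝ)
    (hx : ∀ i ∈ T, 0 ≤ x i) (hy : ∀ i ∈ T, 0 ≤ y i)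
    (hxy : ∀ i ∈ T, 0 < x i → 0 < y i)
    (hsum : ∑ i ∈ T, y i ≤ ∑ i ∈ T, x i) :
    0 ≤ ∑ i ∈ T, x i * Real.log (x i / y i) := by
  have key : ∀ i ∈ T, x i * Real.log (y i / x i) ≤ y i - x i := by
    intro i hi
    rcases eq_or_lt_of_le (hx i hi) with h0 | hpos
    · simp [← h0, hy i hi]
    · have hyi := hxy i hi hpos
      have harg : 0 < y i / x i := div_pos hyi hpos
      have hl := Real.log_le_sub_one_of_pos harg
      calc x i * Real.log (y i / x i) ≤ x i * (y i / x i - 1) :=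
            mul_le_mul_of_nonneg_left hl hpos.le
        _ = y i - x i := by field_simp
  have hs : ∑ i ∈ T, x i * Real.log (y i / x i) ≤ 0 := by
    calc ∑ i ∈ T, x i * Real.log (y i / x i) ≤ ∑ i ∈ T, (y i - x i) :=
          Finset.sum_le_sum key
      _ = (∑ i ∈ T, y i) - ∑ i ∈ T, x i := Finset.sum_sub_distrib _ _
      _ ≤ 0 := by linarith
  have heq : ∑ i ∈ T, x i * Real.log (x i / y i)
      = - ∑ i ∈ T, x i * Real.log (y i / x i) := by
    rw [← Finset.sum_neg_distrib]
    refine Finset.sum_congr rfl fun i hi => ?_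
    rcases eq_or_lt_of_le (hx i hi) with h0 | hpos
    · simp [← h0]
    · have hinv : x i / y i = (y i / x i)⁻¹ := by rw [inv_div]
      rw [hinv, Real.log_inv]; ring
  rw [heq]; linarith

end MarginalTransferAux

namespace MarginalTransferAux
open MarginalTransfer MeasureTheory

/-- `condMI` as a finite sum, when the first variable has finitely many values. -/
lemma condMI_eq {Ω : Type*} [MeasurableSpace Ω] (μ : Measure Ω)
    {𝒞 𝒟 : Type*} [Fintype 𝒞] [Fintype 𝒟]
    (C : Ω → 𝒞) (D : Ω → 𝒟) (f : Ω → ℝ) (Sf : Finset ℝ) (hSf : ∀ ω, f ω ∈ Sf) :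
    condMI μ f C D = ∑ u ∈ Sf, ∑ c : 𝒞, ∑ d : 𝒟,
      pr μ {ω | f ω = u ∧ C ω = c ∧ D ω = d} *
        Real.log (pr μ {ω | f ω = u ∧ C ω = c ∧ D ω = d} * pr μ {ω | D ω = d} /
          (pr μ {ω | f ω = u ∧ D ω = d} * pr μ {ω | C ω = c ∧ D ω = d})) := by
  rw [condMI, tsum_eq_sum (s := Sf) ?_]
  · refine Finset.sum_congr rfl fun u _ => ?_
    rw [tsum_fintype]
    exact Finset.sum_congr rfl fun c _ => by rw [tsum_fintype]
  · intro u hu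
    have h0 : ∀ (c : 𝒞) (d : 𝒟), pr μ {ω | f ω = u ∧ C ω = c ∧ D ω = d} = 0 :=
      fun c d => pr_empty_of μ _ (fun ω h => hu (h.1 ▸ hSf ω))
    simp [h0]

end MarginalTransferAux

namespace MarginalTransferAux
open MarginalTransfer MeasureTheory

lemma log4 (x y z w : ℝ) (hx : 0 < x) (hy : 0 < y) (hz : 0 < z) (hw : 0 < w) :
    Real.log (x * y / (z * w)) =
      Real.log x + Real.log y - Real.log z - Real.log w := by
  rw [Real.log_div (mul_pos hx hy).ne' (mul_pos hz hw).ne',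
    Real.log_mul hx.ne' hy.ne', Real.log_mul hz.ne' hw.ne']
  ring

lemma swap3 {𝒞 𝒟 : Type*} [Fintype 𝒞] [Fintype 𝒟] {α : Type*} (T : Finset α)
    (g : α → 𝒞 → 𝒟 → ℝ) :
    (∑ c : 𝒞, ∑ d : 𝒟, ∑ t ∈ T, g t c d) = ∑ t ∈ T, ∑ c : 𝒞, ∑ d : 𝒟, g t c d :=
  calc (∑ c : 𝒞, ∑ d : 𝒟, ∑ t ∈ T, g t c d)
      = ∑ c : 𝒞, ∑ t ∈ T, ∑ d : 𝒟, g t c d :=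
        Finset.sum_congr rfl fun c _ => Finset.sum_comm
    _ = ∑ t ∈ T, ∑ c : 𝒞, ∑ d : 𝒟, g t c d := Finset.sum_comm

end MarginalTransferAux

open MarginalTransferAux

/-- **Conditional extension of the subadditivity inequality** (used in the proof
of Theorem A.1(d)).  Let `A` and `B` be random variables taking finitely many
real values and `C, D` finite-valued random variables.  If `A ⟂ B ∣ D` and
`A ⟂ B ∣ (D, C)`, then `I(A + B; C ∣ D) ≤ I(A; C ∣ D) + I(B; C ∣ D)`. -/
theorem conditional_mi_subadditivity_under_sums
    {Ω : Type*} [MeasurableSpace Ω] (μ : Measure Ω) [IsProbabilityMeasure μ]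
    {𝒞 𝒟 : Type*}
    [Fintype 𝒞] [Nonempty 𝒞] [MeasurableSpace 𝒞] [MeasurableSingletonClass 𝒞]
    [Fintype 𝒟] [Nonempty 𝒟] [MeasurableSpace 𝒟] [MeasurableSingletonClass 𝒟]
    (A B : Ω → ℝ) (C : Ω → 𝒞) (D : Ω → 𝒟)
    (hA : Measurable A) (hB : Measurable B) (hC : Measurable C) (hD : Measurable D)
    (hAfin : (Set.range A).Finite) (hBfin : (Set.range B).Finite)
    (hAB_D : CondIndep μ A B D)
    (hAB_DC : CondIndep μ A B (fun ω => (D ω, C ω))) :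
    condMI μ (fun ω => A ω + B ω) C D ≤ condMI μ A C D + condMI μ B C D := by
  classical
  -- basic measurability facts
  have mA : ∀ a : ℝ, MeasurableSet {ω | A ω = a} :=
    fun a => hA (measurableSet_singleton a)
  have mB : ∀ b : ℝ, MeasurableSet {ω | B ω = b} :=
    fun b => hB (measurableSet_singleton b)
  have mC : ∀ c : 𝒞, MeasurableSet {ω | C ω = c} :=
    fun c => hC (measurableSet_singleton c)
  have mD : ∀ d : 𝒟, MeasurableSet {ω | D ω = d} :=
    fun d => hD (measurableSet_singleton d)
  have mS : ∀ s : ℝ, MeasurableSet {ω | A ω + B ω = s} :=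
    fun s => (hA.add hB) (measurableSet_singleton s)
  -- finite value sets
  set SA : Finset ℝ := hAfin.toFinset with hSA_def
  set SB : Finset ℝ := hBfin.toFinset with hSB_def
  have memA : ∀ ω, A ω ∈ SA := fun ω => hAfin.mem_toFinset.2 ⟨ω, rfl⟩
  have memB : ∀ ω, B ω ∈ SB := fun ω => hBfin.mem_toFinset.2 ⟨ω, rfl⟩
  set SS : Finset ℝ := (SA ×ˢ SB).image (fun p => p.1 + p.2) with hSS_def
  have memS : ∀ ω, A ω + B ω ∈ SS := fun ω =>
    Finset.mem_image.2 ⟨(A ω, B ω), Finset.mem_product.2 ⟨memA ω, memB ω⟩, rfl⟩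
  -- probability functions
  set q : ℝ → ℝ → 𝒞 → 𝒟 → ℝ :=
    fun a b c d => pr μ {ω | A ω = a ∧ B ω = b ∧ C ω = c ∧ D ω = d} with hq_def
  set pACD : ℝ → 𝒞 → 𝒟 → ℝ :=
    fun a c d => pr μ {ω | A ω = a ∧ C ω = c ∧ D ω = d} with hpACD_def
  set pBCD : ℝ → 𝒞 → 𝒟 → ℝ :=
    fun b c d => pr μ {ω | B ω = b ∧ C ω = c ∧ D ω = d} with hpBCD_def
  set pSCD : ℝ → 𝒞 → 𝒟 → ℝ :=
    fun s c d => pr μ {ω | A ω + B ω = s ∧ C ω = c ∧ D ω = d} with hpSCD_def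
  set pAD : ℝ → 𝒟 → ℝ := fun a d => pr μ {ω | A ω = a ∧ D ω = d} with hpAD_def
  set pBD : ℝ → 𝒟 → ℝ := fun b d => pr μ {ω | B ω = b ∧ D ω = d} with hpBD_def
  set pSD : ℝ → 𝒟 → ℝ := fun s d => pr μ {ω | A ω + B ω = s ∧ D ω = d} with hpSD_def
  set pABD : ℝ → ℝ → 𝒟 → ℝ :=
    fun a b d => pr μ {ω | A ω = a ∧ B ω = b ∧ D ω = d} with hpABD_def
  set pCD : 𝒞 → 𝒟 → ℝ := fun c d => pr μ {ω | C ω = c ∧ D ω = d} with hpCD_def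
  set pD : 𝒟 → ℝ := fun d => pr μ {ω | D ω = d} with hpD_def
  -- nonnegativity
  have qnn : ∀ a b c d, 0 ≤ q a b c d := by
    intro a b c d; simp only [hq_def]; exact pr_nonneg μ _
  have pABDnn : ∀ a b d, 0 ≤ pABD a b d := by
    intro a b d; simp only [hpABD_def]; exact pr_nonneg μ _
  have pSCDnn : ∀ s c d, 0 ≤ pSCD s c d := by
    intro s c d; simp only [hpSCD_def]; exact pr_nonneg μ _
  have pSDnn : ∀ s d, 0 ≤ pSD s d := by
    intro s d; simp only [hpSD_def]; exact pr_nonneg μ _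
  -- marginalization identities
  have mACD : ∀ a c d, pACD a c d = ∑ b ∈ SB, q a b c d := by
    intro a c d
    simp only [hpACD_def, hq_def]
    refine (pr_decompose μ B SB memB (fun ω => A ω = a ∧ C ω = c ∧ D ω = d)
      (fun b => (mB b).inter ((mA a).inter ((mC c).inter (mD d))))).trans ?_
    exact Finset.sum_congr rfl fun b _ => pr_congr μ (fun ω => by tauto)
  have mBCD : ∀ b c d, pBCD b c d = ∑ a ∈ SA, q a b c d := by
    intro b c d
    simp only [hpBCD_def, hq_def]
    refine (pr_decompose μ A SA memA (fun ω => B ω = b ∧ C ω = c ∧ D ω = d)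
      (fun a => (mA a).inter ((mB b).inter ((mC c).inter (mD d))))).trans ?_
    exact Finset.sum_congr rfl fun a _ => pr_congr μ (fun ω => by tauto)
  have mABD : ∀ a b d, ∑ c : 𝒞, q a b c d = pABD a b d := by
    intro a b d
    simp only [hpABD_def, hq_def]
    symm
    refine (pr_decompose μ C Finset.univ (fun ω => Finset.mem_univ _)
      (fun ω => A ω = a ∧ B ω = b ∧ D ω = d)
      (fun c => (mC c).inter ((mA a).inter ((mB b).inter (mD d))))).trans ?_
    exact Finset.sum_congr rfl fun c _ => pr_congr μ (fun ω => by tauto)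
  have mSDc : ∀ s d, ∑ c : 𝒞, pSCD s c d = pSD s d := by
    intro s d
    simp only [hpSCD_def, hpSD_def]
    symm
    refine (pr_decompose μ C Finset.univ (fun ω => Finset.mem_univ _)
      (fun ω => A ω + B ω = s ∧ D ω = d)
      (fun c => (mC c).inter ((mS s).inter (mD d)))).trans ?_
    exact Finset.sum_congr rfl fun c _ => pr_congr μ (fun ω => by tauto)
  have mSCD : ∀ s c d, pSCD s c d =
      ∑ p ∈ (SA ×ˢ SB).filter (fun p => p.1 + p.2 = s), q p.1 p.2 c d := by
    intro s c d
    simp only [hpSCD_def, hq_def]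
    have h1 := pr_decompose μ (fun ω => (A ω, B ω)) (SA ×ˢ SB)
      (fun ω => Finset.mem_product.2 ⟨memA ω, memB ω⟩)
      (fun ω => A ω + B ω = s ∧ C ω = c ∧ D ω = d)
      (fun i => by
        have hset : {ω | (A ω, B ω) = i ∧ (A ω + B ω = s ∧ C ω = c ∧ D ω = d)}
            = {ω | A ω = i.1} ∩ ({ω | B ω = i.2} ∩ ({ω | A ω + B ω = s} ∩
              ({ω | C ω = c} ∩ {ω | D ω = d}))) := by
          ext ω
          simp only [Set.mem_setOf_eq, Set.mem_inter_iff, Prod.ext_iff]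
          tauto
        rw [hset]
        exact (mA i.1).inter ((mB i.2).inter ((mS s).inter ((mC c).inter (mD d)))))
    refine h1.trans ?_
    have h2 : ∀ p ∈ SA ×ˢ SB,
        pr μ {ω | (A ω, B ω) = p ∧ (A ω + B ω = s ∧ C ω = c ∧ D ω = d)}
        = if p.1 + p.2 = s
            then pr μ {ω | A ω = p.1 ∧ B ω = p.2 ∧ C ω = c ∧ D ω = d} else 0 := by
      intro p _
      by_cases hps : p.1 + p.2 = s
      · rw [if_pos hps]
        refine pr_congr μ (fun ω => ?_)
        simp only [Prod.ext_iff]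
        constructor
        · rintro ⟨⟨h1, h2⟩, -, h3, h4⟩; exact ⟨h1, h2, h3, h4⟩
        · rintro ⟨h1, h2, h3, h4⟩
          exact ⟨⟨h1, h2⟩, by rw [h1, h2, hps], h3, h4⟩
      · rw [if_neg hps]
        refine pr_empty_of μ _ (fun ω h => ?_)
        rcases h with ⟨hab, hs, -⟩
        rw [Prod.ext_iff] at hab
        exact hps (by rw [← hab.1, ← hab.2]; exact hs)
    refine (Finset.sum_congr rfl h2).trans ?_
    exact (Finset.sum_filter _ _).symm
  have mSD : ∀ s d, pSD s d =
      ∑ p ∈ (SA ×ˢ SB).filter (fun p => p.1 + p.2 = s), pABD p.1 p.2 d := by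
    intro s d
    simp only [hpSD_def, hpABD_def]
    have h1 := pr_decompose μ (fun ω => (A ω, B ω)) (SA ×ˢ SB)
      (fun ω => Finset.mem_product.2 ⟨memA ω, memB ω⟩)
      (fun ω => A ω + B ω = s ∧ D ω = d)
      (fun i => by
        have hset : {ω | (A ω, B ω) = i ∧ (A ω + B ω = s ∧ D ω = d)}
            = {ω | A ω = i.1} ∩ ({ω | B ω = i.2} ∩ ({ω | A ω + B ω = s} ∩
              {ω | D ω = d})) := by
          ext ω
          simp only [Set.mem_setOf_eq, Set.mem_inter_iff, Prod.ext_iff]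
          tauto
        rw [hset]
        exact (mA i.1).inter ((mB i.2).inter ((mS s).inter (mD d))))
    refine h1.trans ?_
    have h2 : ∀ p ∈ SA ×ˢ SB,
        pr μ {ω | (A ω, B ω) = p ∧ (A ω + B ω = s ∧ D ω = d)}
        = if p.1 + p.2 = s
            then pr μ {ω | A ω = p.1 ∧ B ω = p.2 ∧ D ω = d} else 0 := by
      intro p _
      by_cases hps : p.1 + p.2 = s
      · rw [if_pos hps]
        refine pr_congr μ (fun ω => ?_)
        simp only [Prod.ext_iff]
        constructor
        · rintro ⟨⟨h1, h2⟩, -, h4⟩; exact ⟨h1, h2, h4⟩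
        · rintro ⟨h1, h2, h4⟩
          exact ⟨⟨h1, h2⟩, by rw [h1, h2, hps], h4⟩
      · rw [if_neg hps]
        refine pr_empty_of μ _ (fun ω h => ?_)
        rcases h with ⟨hab, hs, -⟩
        rw [Prod.ext_iff] at hab
        exact hps (by rw [← hab.1, ← hab.2]; exact hs)
    refine (Finset.sum_congr rfl h2).trans ?_
    exact (Finset.sum_filter _ _).symm
  -- independence identities
  have indD : ∀ a b d, pABD a b d * pD d = pAD a d * pBD b d := by
    intro a b d
    simp only [hpABD_def, hpD_def, hpAD_def, hpBD_def]
    exact hAB_D a b d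
  have indDC : ∀ a b c d, q a b c d * pCD c d = pACD a c d * pBCD b c d := by
    intro a b c d
    simp only [hq_def, hpCD_def, hpACD_def, hpBCD_def]
    have h := hAB_DC a b (d, c)
    refine Eq.trans ?_ (h.trans ?_)
    · exact congrArg₂ (· * ·)
        (pr_congr μ (fun ω => by simp only [Prod.ext_iff]; tauto)).symm
        (pr_congr μ (fun ω => by simp only [Prod.ext_iff]; tauto)).symm
    · exact congrArg₂ (· * ·)
        (pr_congr μ (fun ω => by simp only [Prod.ext_iff]; tauto))
        (pr_congr μ (fun ω => by simp only [Prod.ext_iff]; tauto))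
  -- pointwise key identity
  have key : ∀ (a b : ℝ) (c : 𝒞) (d : 𝒟),
      q a b c d * Real.log (pACD a c d * pD d / (pAD a d * pCD c d))
        + q a b c d * Real.log (pBCD b c d * pD d / (pBD b d * pCD c d))
        - q a b c d * Real.log (pSCD (a + b) c d * pD d / (pSD (a + b) d * pCD c d))
      = q a b c d * Real.log (q a b c d /
          (pABD a b d * pSCD (a + b) c d / pSD (a + b) d)) := by
    intro a b c d
    rcases eq_or_lt_of_le (qnn a b c d) with h0 | hpos
    · rw [← h0]; ring
    · have hraw : 0 < pr μ {ω | A ω = a ∧ B ω = b ∧ C ω = c ∧ D ω = d} := by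
        simpa only [hq_def] using hpos
      have hACD : 0 < pACD a c d := by
        simp only [hpACD_def]
        exact lt_of_lt_of_le hraw (pr_mono μ (fun ω h => ⟨h.1, h.2.2⟩))
      have hBCD : 0 < pBCD b c d := by
        simp only [hpBCD_def]
        exact lt_of_lt_of_le hraw (pr_mono μ (fun ω h => ⟨h.2.1, h.2.2⟩))
      have hAD : 0 < pAD a d := by
        simp only [hpAD_def]
        exact lt_of_lt_of_le hraw (pr_mono μ (fun ω h => ⟨h.1, h.2.2.2⟩))
      have hBD : 0 < pBD b d := by
        simp only [hpBD_def]
        exact lt_of_lt_of_le hraw (pr_mono μ (fun ω h => ⟨h.2.1, h.2.2.2⟩))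
      have hCD : 0 < pCD c d := by
        simp only [hpCD_def]
        exact lt_of_lt_of_le hraw (pr_mono μ (fun ω h => h.2.2))
      have hDpos : 0 < pD d := by
        simp only [hpD_def]
        exact lt_of_lt_of_le hraw (pr_mono μ (fun ω h => h.2.2.2))
      have hABD : 0 < pABD a b d := by
        simp only [hpABD_def]
        exact lt_of_lt_of_le hraw (pr_mono μ (fun ω h => ⟨h.1, h.2.1, h.2.2.2⟩))
      have hSCD : 0 < pSCD (a + b) c d := by
        simp only [hpSCD_def]
        exact lt_of_lt_of_le hraw
          (pr_mono μ (fun ω h => ⟨by rw [h.1, h.2.1], h.2.2⟩))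
      have hSD : 0 < pSD (a + b) d := by
        simp only [hpSD_def]
        exact lt_of_lt_of_le hraw
          (pr_mono μ (fun ω h => ⟨by rw [h.1, h.2.1], h.2.2.2⟩))
      have hdiv : q a b c d / (pABD a b d * pSCD (a + b) c d / pSD (a + b) d)
          = q a b c d * pSD (a + b) d / (pABD a b d * pSCD (a + b) c d) :=
        div_div_eq_mul_div _ _ _
      have li1 : Real.log (q a b c d) + Real.log (pCD c d)
          = Real.log (pACD a c d) + Real.log (pBCD b c d) := by
        have h := congrArg Real.log (indDC a b c d)
        rwa [Real.log_mul hpos.ne' hCD.ne', Real.log_mul hACD.ne' hBCD.ne'] at h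
      have li2 : Real.log (pABD a b d) + Real.log (pD d)
          = Real.log (pAD a d) + Real.log (pBD b d) := by
        have h := congrArg Real.log (indD a b d)
        rwa [Real.log_mul hABD.ne' hDpos.ne', Real.log_mul hAD.ne' hBD.ne'] at h
      rw [hdiv, log4 _ _ _ _ hACD hDpos hAD hCD, log4 _ _ _ _ hBCD hDpos hBD hCD,
        log4 _ _ _ _ hSCD hDpos hSD hCD, log4 _ _ _ _ hpos hSD hABD hSCD]
      linear_combination (-(q a b c d)) * li1 + q a b c d * li2
  -- condMI as sums over SA ×ˢ SB
  have h1 : condMI μ A C D = ∑ p ∈ SA ×ˢ SB, ∑ c : 𝒞, ∑ d : 𝒟,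
      q p.1 p.2 c d * Real.log (pACD p.1 c d * pD d / (pAD p.1 d * pCD c d)) := by
    have h1a : condMI μ A C D = ∑ a ∈ SA, ∑ c : 𝒞, ∑ d : 𝒟,
        pACD a c d * Real.log (pACD a c d * pD d / (pAD a d * pCD c d)) := by
      simp only [hpACD_def, hpD_def, hpAD_def, hpCD_def]
      exact condMI_eq μ C D A SA memA
    rw [h1a]
    refine Eq.trans ?_ (Finset.sum_product (s := SA) (t := SB)
      (f := fun p => ∑ c : 𝒞, ∑ d : 𝒟,
        q p.1 p.2 c d *
          Real.log (pACD p.1 c d * pD d / (pAD p.1 d * pCD c d)))).symm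
    refine Finset.sum_congr rfl fun a _ => ?_
    refine Eq.trans (Finset.sum_congr rfl fun c _ =>
      Finset.sum_congr rfl fun d _ => ?_) (swap3 SB _)
    have e1 : pACD a c d * Real.log (pACD a c d * pD d / (pAD a d * pCD c d))
        = ∑ b ∈ SB, q a b c d *
            Real.log (pACD a c d * pD d / (pAD a d * pCD c d)) := by
      rw [← Finset.sum_mul, ← mACD]
    exact e1.trans (Finset.sum_congr rfl fun b _ => rfl)
  have h2 : condMI μ B C D = ∑ p ∈ SA ×ˢ SB, ∑ c : 𝒞, ∑ d : 𝒟,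
      q p.1 p.2 c d * Real.log (pBCD p.2 c d * pD d / (pBD p.2 d * pCD c d)) := by
    have h2a : condMI μ B C D = ∑ b ∈ SB, ∑ c : 𝒞, ∑ d : 𝒟,
        pBCD b c d * Real.log (pBCD b c d * pD d / (pBD b d * pCD c d)) := by
      simp only [hpBCD_def, hpD_def, hpBD_def, hpCD_def]
      exact condMI_eq μ C D B SB memB
    rw [h2a]
    refine Eq.trans ?_ (Finset.sum_product (s := SA) (t := SB)
      (f := fun p => ∑ c : 𝒞, ∑ d : 𝒟,
        q p.1 p.2 c d *
          Real.log (pBCD p.2 c d * pD d / (pBD p.2 d * pCD c d)))).symm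
    refine Eq.trans ?_ Finset.sum_comm
    refine Finset.sum_congr rfl fun b _ => ?_
    refine Eq.trans (Finset.sum_congr rfl fun c _ =>
      Finset.sum_congr rfl fun d _ => ?_) (swap3 SA _)
    have e1 : pBCD b c d * Real.log (pBCD b c d * pD d / (pBD b d * pCD c d))
        = ∑ a ∈ SA, q a b c d *
            Real.log (pBCD b c d * pD d / (pBD b d * pCD c d)) := by
      rw [← Finset.sum_mul, ← mBCD]
    exact e1.trans (Finset.sum_congr rfl fun a _ => rfl)
  have h3 : condMI μ (fun ω => A ω + B ω) C D
      = ∑ p ∈ SA ×ˢ SB, ∑ c : 𝒞, ∑ d : 𝒟, q p.1 p.2 c d *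
          Real.log (pSCD (p.1 + p.2) c d * pD d /
            (pSD (p.1 + p.2) d * pCD c d)) := by
    have h3a : condMI μ (fun ω => A ω + B ω) C D = ∑ s ∈ SS, ∑ c : 𝒞, ∑ d : 𝒟,
        pSCD s c d * Real.log (pSCD s c d * pD d / (pSD s d * pCD c d)) := by
      simp only [hpSCD_def, hpD_def, hpSD_def, hpCD_def]
      exact condMI_eq μ C D (fun ω => A ω + B ω) SS memS
    rw [h3a]
    refine Eq.trans ?_ (Finset.sum_fiberwise_of_maps_to
      (g := fun p : ℝ × ℝ => p.1 + p.2) (t := SS)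
      (fun p hp => Finset.mem_image.2 ⟨p, hp, rfl⟩)
      (fun p => ∑ c : 𝒞, ∑ d : 𝒟, q p.1 p.2 c d *
        Real.log (pSCD (p.1 + p.2) c d * pD d /
          (pSD (p.1 + p.2) d * pCD c d))))
    refine Finset.sum_congr rfl fun s hs => ?_
    refine Eq.trans ?_
      (swap3 ((SA ×ˢ SB).filter (fun p => p.1 + p.2 = s)) _)
    refine Finset.sum_congr rfl fun c _ => Finset.sum_congr rfl fun d _ => ?_
    have e1 : pSCD s c d * Real.log (pSCD s c d * pD d / (pSD s d * pCD c d))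
        = ∑ p ∈ (SA ×ˢ SB).filter (fun p => p.1 + p.2 = s), q p.1 p.2 c d *
            Real.log (pSCD s c d * pD d / (pSD s d * pCD c d)) := by
      rw [← Finset.sum_mul, ← mSCD]
    refine e1.trans (Finset.sum_congr rfl fun p hp => ?_)
    rw [(Finset.mem_filter.1 hp).2]
  -- the log-sum inequality applied to the whole quadruple sum
  have main0 : 0 ≤ ∑ p ∈ SA ×ˢ SB, ∑ c : 𝒞, ∑ d : 𝒟,
      q p.1 p.2 c d * Real.log (q p.1 p.2 c d /
        (pABD p.1 p.2 d * pSCD (p.1 + p.2) c d / pSD (p.1 + p.2) d)) := by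
    have hls := sum_mul_log_div_nonneg
      ((SA ×ˢ SB) ×ˢ ((Finset.univ : Finset 𝒞) ×ˢ (Finset.univ : Finset 𝒟)))
      (fun i => q i.1.1 i.1.2 i.2.1 i.2.2)
      (fun i => pABD i.1.1 i.1.2 i.2.2 * pSCD (i.1.1 + i.1.2) i.2.1 i.2.2 /
        pSD (i.1.1 + i.1.2) i.2.2)
      (fun i _ => qnn _ _ _ _)
      (fun i _ => div_nonneg (mul_nonneg (pABDnn _ _ _) (pSCDnn _ _ _)) (pSDnn _ _))
      (fun i _ hpos => by
        have hraw : 0 < pr μ {ω | A ω = i.1.1 ∧ B ω = i.1.2 ∧ C ω = i.2.1 ∧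
            D ω = i.2.2} := by simpa only [hq_def] using hpos
        have hABD : 0 < pABD i.1.1 i.1.2 i.2.2 := by
          simp only [hpABD_def]
          exact lt_of_lt_of_le hraw (pr_mono μ (fun ω h => ⟨h.1, h.2.1, h.2.2.2⟩))
        have hSCD : 0 < pSCD (i.1.1 + i.1.2) i.2.1 i.2.2 := by
          simp only [hpSCD_def]
          exact lt_of_lt_of_le hraw
            (pr_mono μ (fun ω h => ⟨by rw [h.1, h.2.1], h.2.2⟩))
        have hSD : 0 < pSD (i.1.1 + i.1.2) i.2.2 := by
          simp only [hpSD_def]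
          exact lt_of_lt_of_le hraw
            (pr_mono μ (fun ω h => ⟨by rw [h.1, h.2.1], h.2.2.2⟩))
        exact div_pos (mul_pos hABD hSCD) hSD)
      ?_
    · refine le_trans hls (le_of_eq ?_)
      simp only [Finset.sum_product]
    · -- ∑ y ≤ ∑ x
      have ey : (∑ i ∈ (SA ×ˢ SB) ×ˢ ((Finset.univ : Finset 𝒞) ×ˢ (Finset.univ : Finset 𝒟)),
          pABD i.1.1 i.1.2 i.2.2 * pSCD (i.1.1 + i.1.2) i.2.1 i.2.2 /
            pSD (i.1.1 + i.1.2) i.2.2)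
          = ∑ p ∈ SA ×ˢ SB, ∑ c : 𝒞, ∑ d : 𝒟,
            pABD p.1 p.2 d * pSCD (p.1 + p.2) c d / pSD (p.1 + p.2) d := by
        simp only [Finset.sum_product]
      have ex : (∑ i ∈ (SA ×ˢ SB) ×ˢ ((Finset.univ : Finset 𝒞) ×ˢ (Finset.univ : Finset 𝒟)),
          q i.1.1 i.1.2 i.2.1 i.2.2)
          = ∑ p ∈ SA ×ˢ SB, ∑ c : 𝒞, ∑ d : 𝒟, q p.1 p.2 c d := by
        simp only [Finset.sum_product]
      rw [ey, ex]
      refine Finset.sum_le_sum fun p _ => ?_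
      refine le_trans (le_of_eq Finset.sum_comm)
        (le_trans ?_ (le_of_eq Finset.sum_comm))
      refine Finset.sum_le_sum fun d _ => ?_
      have hxs : ∑ c : 𝒞, q p.1 p.2 c d = pABD p.1 p.2 d := mABD _ _ _
      rw [hxs]
      have hys : ∑ c : 𝒞, pABD p.1 p.2 d * pSCD (p.1 + p.2) c d / pSD (p.1 + p.2) d
          = pABD p.1 p.2 d * pSD (p.1 + p.2) d / pSD (p.1 + p.2) d := by
        rw [← Finset.sum_div, ← Finset.mul_sum, mSDc]
      rw [hys]
      rcases eq_or_ne (pSD (p.1 + p.2) d) 0 with h0 | h0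
      · rw [h0]
        simpa using pABDnn p.1 p.2 d
      · rw [mul_div_assoc, div_self h0, mul_one]
  -- put things together
  have main : 0 ≤ ∑ p ∈ SA ×ˢ SB, ∑ c : 𝒞, ∑ d : 𝒟,
      (q p.1 p.2 c d * Real.log (pACD p.1 c d * pD d / (pAD p.1 d * pCD c d))
        + q p.1 p.2 c d * Real.log (pBCD p.2 c d * pD d / (pBD p.2 d * pCD c d))
        - q p.1 p.2 c d * Real.log (pSCD (p.1 + p.2) c d * pD d /
            (pSD (p.1 + p.2) d * pCD c d))) := by
    have e : (∑ p ∈ SA ×ˢ SB, ∑ c : 𝒞, ∑ d : 𝒟,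
        (q p.1 p.2 c d * Real.log (pACD p.1 c d * pD d / (pAD p.1 d * pCD c d))
          + q p.1 p.2 c d * Real.log (pBCD p.2 c d * pD d / (pBD p.2 d * pCD c d))
          - q p.1 p.2 c d * Real.log (pSCD (p.1 + p.2) c d * pD d /
              (pSD (p.1 + p.2) d * pCD c d))))
        = ∑ p ∈ SA ×ˢ SB, ∑ c : 𝒞, ∑ d : 𝒟,
          q p.1 p.2 c d * Real.log (q p.1 p.2 c d /
            (pABD p.1 p.2 d * pSCD (p.1 + p.2) c d / pSD (p.1 + p.2) d)) :=
      Finset.sum_congr rfl fun p _ => Finset.sum_congr rfl fun c _ =>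
        Finset.sum_congr rfl fun d _ => key p.1 p.2 c d
    rw [e]
    exact main0
  rw [h1, h2, h3]
  have split : (∑ p ∈ SA ×ˢ SB, ∑ c : 𝒞, ∑ d : 𝒟,
      (q p.1 p.2 c d * Real.log (pACD p.1 c d * pD d / (pAD p.1 d * pCD c d))
        + q p.1 p.2 c d * Real.log (pBCD p.2 c d * pD d / (pBD p.2 d * pCD c d))
        - q p.1 p.2 c d * Real.log (pSCD (p.1 + p.2) c d * pD d /
            (pSD (p.1 + p.2) d * pCD c d))))
      = (∑ p ∈ SA ×ˢ SB, ∑ c : 𝒞, ∑ d : 𝒟,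
          q p.1 p.2 c d * Real.log (pACD p.1 c d * pD d / (pAD p.1 d * pCD c d)))
        + (∑ p ∈ SA ×ˢ SB, ∑ c : 𝒞, ∑ d : 𝒟,
          q p.1 p.2 c d * Real.log (pBCD p.2 c d * pD d / (pBD p.2 d * pCD c d)))
        - ∑ p ∈ SA ×ˢ SB, ∑ c : 𝒞, ∑ d : 𝒟,
          q p.1 p.2 c d * Real.log (pSCD (p.1 + p.2) c d * pD d /
            (pSD (p.1 + p.2) d * pCD c d)) := by
    simp only [Finset.sum_add_distrib, Finset.sum_sub_distrib]
  rw [split] at main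
  linarith
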